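/- Let Q(j) := lim_{n→∞} P(n,j), let R(k) := lim_{j→∞} 2^j·P(k,j) for k ≥ 2, and let ρ := Σ_{k≥2} (e^{−1}/k!)·R(k). Then 2^j·Q(j) converges as j → ∞ to 2ρ/(1 − 2e^{−1}); that is, Q(j) ~ (2ρ/(1−2e^{−1}))·2^{−j} as j → ∞ (numerically ρ = 0.2950911517… and 2ρ/(1−2e^{−1}) = 2.233499118…). -/

import Mathlib

open Filter Topology Finset

lemma contraction_lemma {a L : ℝ} (ha0 : 0 ≤ a) (ha : a < 1) {x u : ℕ → ℝ}
    (hx : ∀ j, x (j+1) = a * x j + u j) (hu : Tendsto u atTop (𝓝 L)) :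
    Tendsto x atTop (𝓝 (L / (1-a))) := by
  have h1a : 0 < 1 - a := by linarith
  set c := L / (1 - a) with hc
  have hy : Tendsto (fun j => x j - c) atTop (𝓝 0) := by
    rw [Metric.tendsto_atTop]
    intro ε hε
    have hε2 : 0 < ε * (1 - a) / 2 := by positivity
    obtain ⟨N, hN⟩ := (Metric.tendsto_atTop.1 hu) (ε * (1 - a) / 2) hε2
    have key : ∀ m : ℕ, |x (N + m) - c| ≤ a ^ m * |x N - c| + ε / 2 := by
      intro m
      induction m with
      | zero => simp; linarith
      | succ m ih =>
        have hrec : x (N + m + 1) - c = a * (x (N + m) - c) + (u (N + m) - L) := by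
          rw [hx (N + m)]
          have hcL : c * (1 - a) = L := by rw [hc]; exact div_mul_cancel₀ L h1a.ne'
          linear_combination -hcL
        have hu' : |u (N + m) - L| ≤ ε * (1 - a) / 2 :=
          le_of_lt (by simpa [Real.dist_eq] using hN (N + m) (Nat.le_add_right N m))
        calc |x (N + (m+1)) - c| = |a * (x (N + m) - c) + (u (N + m) - L)| := by
              rw [← hrec]; ring_nf
          _ ≤ a * |x (N + m) - c| + |u (N + m) - L| := by
              refine (abs_add_le _ _).trans ?_
              rw [abs_mul, abs_of_nonneg ha0]
          _ ≤ a * (a ^ m * |x N - c| + ε / 2) + ε * (1 - a) / 2 := by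
              gcongr
          _ = a ^ (m+1) * |x N - c| + ε / 2 := by rw [pow_succ]; ring
    obtain ⟨M, hM⟩ := (Metric.tendsto_atTop.1
      ((tendsto_pow_atTop_nhds_zero_of_lt_one ha0 ha).mul_const (|x N - c|))) (ε/2)
      (by positivity)
    refine ⟨N + M, fun j hj => ?_⟩
    have hjN : N + (j - N) = j := by omega
    have h1 := key (j - N)
    rw [hjN] at h1
    have h2 : a ^ (j - N) * |x N - c| < ε / 2 := by
      have := hM (j - N) (by omega)
      rw [Real.dist_eq, zero_mul, sub_zero] at this
      exact lt_of_abs_lt this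
    rw [Real.dist_eq, sub_zero]
    have : |x j - c| < ε/2 + ε/2 := by linarith
    linarith
  have h := hy.add_const c
  rw [zero_add] at h
  exact h.congr (fun j => by ring)

lemma binom_sum (n : ℕ) (hn : 2 ≤ n) (x : ℝ) :
    ∑ k ∈ Finset.Icc 2 n, (n.choose k : ℝ) * (1/(n:ℝ))^k * (1 - 1/(n:ℝ))^(n-k) * x^k
      = (1 - 1/(n:ℝ) + x/(n:ℝ))^n - (1 - 1/(n:ℝ))^n - x * (1 - 1/(n:ℝ))^(n-1) := by
  have hn0 : (n:ℝ) ≠ 0 := by positivity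
  have hb := add_pow (x/(n:ℝ)) (1 - 1/(n:ℝ)) n
  rw [show x/(n:ℝ) + (1 - 1/(n:ℝ)) = 1 - 1/(n:ℝ) + x/(n:ℝ) by ring] at hb
  have hsplit : ∑ k ∈ Finset.range (n+1), (x/(n:ℝ))^k * (1 - 1/(n:ℝ))^(n-k) * (n.choose k : ℝ)
      = (∑ k ∈ Finset.range 2, (x/(n:ℝ))^k * (1-1/(n:ℝ))^(n-k) * (n.choose k:ℝ))
        + ∑ k ∈ Finset.Icc 2 n, (x/(n:ℝ))^k * (1-1/(n:ℝ))^(n-k) * (n.choose k:ℝ) := by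
    have h1 : Finset.range (n+1) = Finset.Ico 0 (n+1) := by rw [Finset.range_eq_Ico]
    have h2 : Finset.range 2 = Finset.Ico 0 2 := by rw [Finset.range_eq_Ico]
    have h3 : Finset.Icc 2 n = Finset.Ico 2 (n+1) := by
      rw [Finset.Ico_add_one_right_eq_Icc]
    rw [h1, h2, h3]
    exact (Finset.sum_Ico_consecutive _ (by omega) (by omega)).symm
  rw [hsplit] at hb
  have h01 : ∑ k ∈ Finset.range 2, (x/(n:ℝ))^k * (1-1/(n:ℝ))^(n-k) * (n.choose k:ℝ)
      = (1 - 1/(n:ℝ))^n + x * (1 - 1/(n:ℝ))^(n-1) := by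
    rw [Finset.sum_range_succ, Finset.sum_range_one]
    simp only [pow_zero, pow_one, Nat.choose_zero_right, Nat.choose_one_right,
      Nat.sub_zero, Nat.cast_one]
    field_simp
  rw [h01] at hb
  have hterm : ∀ k ∈ Finset.Icc 2 n,
      (x/(n:ℝ))^k * (1-1/(n:ℝ))^(n-k) * (n.choose k:ℝ)
        = (n.choose k : ℝ) * (1/(n:ℝ))^k * (1 - 1/(n:ℝ))^(n-k) * x^k := by
    intro k _
    rw [div_pow]
    ring
  rw [Finset.sum_congr rfl hterm] at hb
  linarith

lemma exp_neg_bound (n : ℕ) (hn : 2 ≤ n) : (1 - 1/(n:ℝ))^n ≤ Real.exp (-1) := by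
  have hn0 : (0:ℝ) < n := by positivity
  have h1 : (0:ℝ) ≤ 1 - 1/(n:ℝ) := by
    rw [sub_nonneg]
    rw [div_le_one hn0]
    exact_mod_cast Nat.one_le_iff_ne_zero.mpr (by omega)
  have h2 : 1 - 1/(n:ℝ) ≤ Real.exp (-(1/(n:ℝ))) := by
    have := Real.add_one_le_exp (-(1/(n:ℝ)))
    linarith
  calc (1 - 1/(n:ℝ))^n ≤ (Real.exp (-(1/(n:ℝ))))^n := pow_le_pow_left₀ h1 h2 n
    _ = Real.exp (-1) := by
        rw [← Real.exp_nat_mul]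
        congr 1
        field_simp

lemma exp_pos_bound (n : ℕ) (hn : 2 ≤ n) : (1 + 1/(n:ℝ))^n ≤ Real.exp 1 := by
  have hn0 : (0:ℝ) < n := by positivity
  have h1 : (0:ℝ) ≤ 1 + 1/(n:ℝ) := by positivity
  have h2 : 1 + 1/(n:ℝ) ≤ Real.exp (1/(n:ℝ)) := by
    have := Real.add_one_le_exp (1/(n:ℝ))
    linarith
  calc (1 + 1/(n:ℝ))^n ≤ (Real.exp (1/(n:ℝ)))^n := pow_le_pow_left₀ h1 h2 n
    _ = Real.exp 1 := by
        rw [← Real.exp_nat_mul]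
        congr 1
        field_simp

lemma key_ineq (n : ℕ) (hn : 2 ≤ n) :
    (1 - 1/(n:ℝ))^n * 2^n + ∑ k ∈ Finset.Icc 2 n,
      (n.choose k : ℝ) * (1/(n:ℝ))^k * (1 - 1/(n:ℝ))^(n-k) * 2^k ≤ 2^n / 2 := by
  rw [binom_sum n hn 2]
  rcases lt_or_ge n 5 with h5 | h5
  · interval_cases n <;> norm_num
  · have hn0 : (0:ℝ) < n := by positivity
    have e1 : (1 - 1/(n:ℝ))^n ≤ Real.exp (-1) := exp_neg_bound n hn
    have e2 : (1 - 1/(n:ℝ) + 2/(n:ℝ))^n ≤ Real.exp 1 := by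
      rw [show 1 - 1/(n:ℝ) + 2/(n:ℝ) = 1 + 1/(n:ℝ) by ring]
      exact exp_pos_bound n hn
    have h1 : (0:ℝ) ≤ 1 - 1/(n:ℝ) := by
      rw [sub_nonneg, div_le_one hn0]
      exact_mod_cast Nat.one_le_iff_ne_zero.mpr (by omega)
    have e3 : (0:ℝ) ≤ (1 - 1/(n:ℝ))^n := pow_nonneg h1 n
    have e4 : (0:ℝ) ≤ (1 - 1/(n:ℝ))^(n-1) := pow_nonneg h1 _
    have h2n : (32:ℝ) ≤ 2^n := by
      calc (32:ℝ) = 2^5 := by norm_num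
        _ ≤ 2^n := pow_le_pow_right₀ (by norm_num) h5
    have hE := Real.exp_one_gt_d9
    have hE' := Real.exp_one_lt_d9
    have hexpneg : Real.exp (-1) = (Real.exp 1)⁻¹ := by
      rw [← Real.exp_neg]
    have hEpos : (0:ℝ) < Real.exp 1 := Real.exp_pos 1
    have hp2 : (0:ℝ) ≤ (2:ℝ)^n := by positivity
    have hEinv : (Real.exp 1)⁻¹ < 0.368 := by
      have h := one_div_lt_one_div_of_lt (by norm_num : (0:ℝ) < 2.7182818283) hE
      rw [one_div] at h
      calc (Real.exp 1)⁻¹ < 1 / 2.7182818283 := h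
        _ < 0.368 := by norm_num
    have key : Real.exp (-1) * 2^n + Real.exp 1 ≤ 2^n / 2 := by
      rw [hexpneg]
      have ha : (Real.exp 1)⁻¹ * 2^n ≤ 0.368 * 2^n :=
        mul_le_mul_of_nonneg_right hEinv.le hp2
      have hb : (0.132:ℝ) * 32 ≤ 0.132 * 2^n := by nlinarith
      linarith
    nlinarith [mul_le_mul_of_nonneg_right e1 hp2]

lemma one_sub_inv_nonneg (n : ℕ) (hn : 2 ≤ n) : (0:ℝ) ≤ 1 - 1/(n:ℝ) := by
  have hn0 : (0:ℝ) < n := by exact_mod_cast Nat.lt_of_lt_of_le (by norm_num) hn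
  rw [sub_nonneg, div_le_one hn0]
  exact_mod_cast Nat.one_le_iff_ne_zero.mpr (by omega)

lemma P_bound (P : ℕ → ℕ → ℝ)
    (hP1 : ∀ n : ℕ, 2 ≤ n → P n 1 = (1 - 1/(n:ℝ))^(n-1))
    (hP : ∀ n : ℕ, 2 ≤ n → ∀ j : ℕ, 2 ≤ j →
      P n j = (1 - 1/(n:ℝ))^n * P n (j-1) +
        ∑ k ∈ Finset.Icc 2 n,
          (n.choose k : ℝ) * (1/(n:ℝ))^k * (1 - 1/(n:ℝ))^(n-k) * P k (j-1)) :
    ∀ j : ℕ, 1 ≤ j → ∀ n : ℕ, 2 ≤ n → 0 ≤ P n j ∧ P n j ≤ 2^n / 2^j := by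
  intro j
  induction j with
  | zero => intro h; omega
  | succ j ih =>
    intro _ n hn
    have h1n := one_sub_inv_nonneg n hn
    have h2n : (4:ℝ) ≤ 2^n := by
      calc (4:ℝ) = 2^2 := by norm_num
        _ ≤ 2^n := pow_le_pow_right₀ (by norm_num) hn
    rcases Nat.eq_zero_or_pos j with rfl | hj
    · rw [hP1 n hn]
      constructor
      · exact pow_nonneg h1n _
      · have hle1 : (1 - 1/(n:ℝ))^(n-1) ≤ 1 := by
          apply pow_le_one₀ h1n
          have : (0:ℝ) < 1/(n:ℝ) := by positivity
          linarith
        calc (1 - 1/(n:ℝ))^(n-1) ≤ 1 := hle1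
          _ ≤ 2^n / 2^1 := by norm_num; linarith
    · have ihn := ih hj
      rw [hP n hn (j+1) (by omega)]
      simp only [Nat.add_sub_cancel]
      have hsum_nonneg : ∀ k ∈ Finset.Icc 2 n,
          (0:ℝ) ≤ (n.choose k : ℝ) * (1/(n:ℝ))^k * (1 - 1/(n:ℝ))^(n-k) := by
        intro k _
        have : (0:ℝ) ≤ (n.choose k : ℝ) := by positivity
        have h2 : (0:ℝ) ≤ (1/(n:ℝ))^k := by positivity
        exact mul_nonneg (mul_nonneg this h2) (pow_nonneg h1n _)
      constructor
      · apply add_nonneg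
        · exact mul_nonneg (pow_nonneg h1n _) (ihn n hn).1
        · apply Finset.sum_nonneg
          intro k hk
          have hk2 : 2 ≤ k := (Finset.mem_Icc.1 hk).1
          exact mul_nonneg (hsum_nonneg k hk) (ihn k hk2).1
      · have step1 : (1 - 1/(n:ℝ))^n * P n j +
            ∑ k ∈ Finset.Icc 2 n,
              (n.choose k : ℝ) * (1/(n:ℝ))^k * (1 - 1/(n:ℝ))^(n-k) * P k j
            ≤ (1 - 1/(n:ℝ))^n * (2^n/2^j) +
            ∑ k ∈ Finset.Icc 2 n,
              (n.choose k : ℝ) * (1/(n:ℝ))^k * (1 - 1/(n:ℝ))^(n-k) * (2^k/2^j) := by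
          apply add_le_add
          · exact mul_le_mul_of_nonneg_left (ihn n hn).2 (pow_nonneg h1n _)
          · apply Finset.sum_le_sum
            intro k hk
            have hk2 : 2 ≤ k := (Finset.mem_Icc.1 hk).1
            exact mul_le_mul_of_nonneg_left (ihn k hk2).2 (hsum_nonneg k hk)
        have step2 : (1 - 1/(n:ℝ))^n * (2^n/2^j) +
            ∑ k ∈ Finset.Icc 2 n,
              (n.choose k : ℝ) * (1/(n:ℝ))^k * (1 - 1/(n:ℝ))^(n-k) * (2^k/2^j)
            = ((1 - 1/(n:ℝ))^n * 2^n +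
              ∑ k ∈ Finset.Icc 2 n,
                (n.choose k : ℝ) * (1/(n:ℝ))^k * (1 - 1/(n:ℝ))^(n-k) * 2^k) / 2^j := by
          rw [add_div, Finset.sum_div]
          congr 1
          · ring
          · apply Finset.sum_congr rfl
            intro k _
            ring
        have step3 : ((1 - 1/(n:ℝ))^n * 2^n +
              ∑ k ∈ Finset.Icc 2 n,
                (n.choose k : ℝ) * (1/(n:ℝ))^k * (1 - 1/(n:ℝ))^(n-k) * 2^k) / 2^j
            ≤ (2^n / 2) / 2^j := by
          gcongr
          · exact key_ineq n hn
        calc _ ≤ _ := step1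
          _ = _ := step2
          _ ≤ (2^n/2)/2^j := step3
          _ = 2^n / 2^(j+1) := by rw [pow_succ]; ring

lemma choose_div_pow_tendsto (m : ℕ) :
    Tendsto (fun n : ℕ => (n.choose m : ℝ) * (1/(n:ℝ))^m) atTop
      (𝓝 (1/(m.factorial : ℝ))) := by
  have hprod : Tendsto (fun n : ℕ => ∏ i ∈ range m, (1 - (i:ℝ)/(n:ℝ))) atTop (𝓝 1) := by
    have hfac : ∀ i : ℕ, Tendsto (fun n : ℕ => 1 - (i:ℝ)/(n:ℝ)) atTop (𝓝 1) := by
      intro i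
      simpa using tendsto_const_nhds.sub (tendsto_const_div_atTop_nhds_zero_nat (i:ℝ))
    have h := tendsto_finset_prod (f := fun (i : ℕ) (n : ℕ) => 1 - (i:ℝ)/(n:ℝ))
      (x := atTop) (a := fun _ => (1:ℝ)) (range m) (fun i _ => hfac i)
    simpa using h
  have h2 := hprod.const_mul (1/(m.factorial : ℝ))
  rw [mul_one] at h2
  apply h2.congr'
  filter_upwards [eventually_ge_atTop (m+1)] with n hn
  have hn0 : (n:ℝ) ≠ 0 := Nat.cast_ne_zero.2 (by omega)
  have hcast : (n.choose m : ℝ) = (n.descFactorial m : ℝ) / (m.factorial : ℝ) := by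
    rw [eq_div_iff (by exact_mod_cast m.factorial_ne_zero)]
    rw [← Nat.cast_mul, mul_comm, ← Nat.descFactorial_eq_factorial_mul_choose]
  have hdesc : (n.descFactorial m : ℝ) = ∏ i ∈ range m, ((n:ℝ) - (i:ℝ)) := by
    rw [Nat.descFactorial_eq_prod_range, Nat.cast_prod]
    apply Finset.prod_congr rfl
    intro i hi
    rw [Nat.cast_sub (by simp at hi; omega)]
  have hterm : ∀ i ∈ range m, (1 - (i:ℝ)/(n:ℝ)) = ((n:ℝ) - (i:ℝ))/(n:ℝ) := by
    intro i _
    field_simp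
  rw [Finset.prod_congr rfl hterm, Finset.prod_div_distrib, Finset.prod_const,
    Finset.card_range, hcast, hdesc]
  rw [one_div (n:ℝ), inv_pow]
  ring

lemma one_sub_div_pow_tendsto (m : ℕ) :
    Tendsto (fun n : ℕ => (1 - 1/(n:ℝ))^(n - m)) atTop (𝓝 (Real.exp (-1))) := by
  have hbase : Tendsto (fun n : ℕ => (1 - 1/(n:ℝ))) atTop (𝓝 1) := by
    simpa using tendsto_const_nhds.sub (tendsto_const_div_atTop_nhds_zero_nat (1:ℝ))
  have hmain : Tendsto (fun n : ℕ => (1 - 1/(n:ℝ))^n) atTop (𝓝 (Real.exp (-1))) := by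
    have h := Real.tendsto_one_add_div_pow_exp (-1)
    apply h.congr
    intro n
    rw [sub_eq_add_neg, neg_div]
  have hden : Tendsto (fun n : ℕ => (1 - 1/(n:ℝ))^m) atTop (𝓝 1) := by
    simpa using hbase.pow m
  have h := hmain.div hden one_ne_zero
  rw [div_one] at h
  apply h.congr'
  filter_upwards [eventually_ge_atTop (m+2)] with n hn
  have hne : (1 - 1/(n:ℝ)) ≠ 0 := by
    have hn2 : (2:ℝ) ≤ (n:ℝ) := by exact_mod_cast le_trans (by omega) hn
    have : 1/(n:ℝ) ≤ 1/2 := by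
      apply one_div_le_one_div_of_le <;> linarith
    intro h0
    rw [sub_eq_zero] at h0
    have : (1:ℝ)/(n:ℝ) = 1 := h0.symm
    linarith
  simp only [Pi.div_apply]
  rw [pow_sub₀ _ hne (by omega : m ≤ n), div_eq_mul_inv]

lemma b_tendsto (m : ℕ) :
    Tendsto (fun n : ℕ => (n.choose m : ℝ) * (1/(n:ℝ))^m * (1 - 1/(n:ℝ))^(n-m))
      atTop (𝓝 (Real.exp (-1) / (m.factorial : ℝ))) := by
  have h := (choose_div_pow_tendsto m).mul (one_sub_div_pow_tendsto m)
  convert h using 2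
  ring

lemma choose_mul_inv_pow_le (n m : ℕ) (hn : 1 ≤ n) :
    (n.choose m : ℝ) * (1/(n:ℝ))^m ≤ 1/(m.factorial : ℝ) := by
  have hn0 : (0:ℝ) < n := by exact_mod_cast hn
  have hf0 : (0:ℝ) < (m.factorial : ℝ) := by exact_mod_cast m.factorial_pos
  have hch : (n.choose m : ℝ) ≤ (n:ℝ)^m / (m.factorial : ℝ) := by
    rw [le_div_iff₀ hf0]
    have hnat : n.choose m * m.factorial ≤ n ^ m := by
      rw [mul_comm, ← Nat.descFactorial_eq_factorial_mul_choose]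
      exact Nat.descFactorial_le_pow n m
    exact_mod_cast hnat
  have hp : (0:ℝ) ≤ (1/(n:ℝ))^m := by positivity
  calc (n.choose m : ℝ) * (1/(n:ℝ))^m ≤ ((n:ℝ)^m / (m.factorial : ℝ)) * (1/(n:ℝ))^m :=
        mul_le_mul_of_nonneg_right hch hp
    _ = 1/(m.factorial : ℝ) := by
        rw [one_div (n:ℝ), inv_pow]
        field_simp

/-- 2^j·Q(j) → 2ρ/(1 − 2e⁻¹) as j → ∞, where
    ρ = Σ_{k≥2} (e⁻¹/k!)·R(k). -/
theorem Q_asymptotics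
    (P : ℕ → ℕ → ℝ) (Q : ℕ → ℝ) (R : ℕ → ℝ) (ρ : ℝ)
    (hP1 : ∀ n : ℕ, 2 ≤ n → P n 1 = (1 - 1/(n:ℝ))^(n-1))
    (hP : ∀ n : ℕ, 2 ≤ n → ∀ j : ℕ, 2 ≤ j →
      P n j = (1 - 1/(n:ℝ))^n * P n (j-1) +
        ∑ k ∈ Finset.Icc 2 n,
          (n.choose k : ℝ) * (1/(n:ℝ))^k * (1 - 1/(n:ℝ))^(n-k) * P k (j-1))
    (hQ : ∀ j : ℕ, 1 ≤ j → Tendsto (fun n : ℕ => P n j) atTop (𝓝 (Q j)))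
    (hR : ∀ k : ℕ, 2 ≤ k →
      Tendsto (fun j : ℕ => (2:ℝ)^j * P k j) atTop (𝓝 (R k)))
    (hρ : ρ = ∑' k : ℕ, Real.exp (-1) / (Nat.factorial (k+2)) * R (k+2)) :
    Tendsto (fun j : ℕ => (2:ℝ)^j * Q j) atTop
      (𝓝 (2 * ρ / (1 - 2 * Real.exp (-1)))) := by
  have hPb := P_bound P hP1 hP
  set T : ℕ → ℝ := fun j => ∑' k : ℕ, Real.exp (-1) / ((Nat.factorial (k+2) : ℝ)) * P (k+2) j
    with hT
  -- Step A
  have stepA : ∀ j : ℕ, 1 ≤ j →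
      Tendsto (fun n : ℕ => ∑ k ∈ Finset.Icc 2 n,
        (n.choose k : ℝ) * (1/(n:ℝ))^k * (1 - 1/(n:ℝ))^(n-k) * P k j) atTop (𝓝 (T j)) := by
    intro j hj
    set f : ℕ → ℕ → ℝ := fun n k => if k + 2 ≤ n then
      (n.choose (k+2) : ℝ) * (1/(n:ℝ))^(k+2) * (1 - 1/(n:ℝ))^(n-(k+2)) * P (k+2) j else 0
      with hf
    have heq : ∀ n : ℕ, 2 ≤ n → ∑ k ∈ Finset.Icc 2 n,
        (n.choose k : ℝ) * (1/(n:ℝ))^k * (1 - 1/(n:ℝ))^(n-k) * P k j = ∑' k, f n k := by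
      intro n hn
      rw [tsum_eq_sum (s := Finset.range (n-1))
        (by intro k hk; simp only [Finset.mem_range] at hk; rw [hf]; simp only
            rw [if_neg (by omega : ¬ (k + 2 ≤ n))])]
      rw [show Finset.Icc 2 n = Finset.Ico 2 (n+1) by
            rw [Finset.Ico_add_one_right_eq_Icc],
        Finset.sum_Ico_eq_sum_range]
      apply Finset.sum_congr (by rw [show n+1-2 = n-1 by omega])
      intro i hi
      simp only [Finset.mem_range] at hi
      rw [hf]
      simp only
      rw [if_pos (by omega), show 2 + i = i + 2 by omega]
    have hsum0 : Summable (fun m : ℕ => (2:ℝ)^m / (Nat.factorial m : ℝ)) :=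
      Real.summable_pow_div_factorial 2
    have hsum2 : Summable (fun k : ℕ => (2:ℝ)^(k+2) / ((Nat.factorial (k+2)):ℝ)) :=
      (summable_nat_add_iff (f := fun m : ℕ => (2:ℝ)^m / (Nat.factorial m : ℝ)) 2).2 hsum0
    have hbsum : Summable (fun k : ℕ => (2:ℝ)^(k+2) / ((Nat.factorial (k+2)):ℝ) / 2^j) :=
      Summable.div_const hsum2 _
    have htannery := tendsto_tsum_of_dominated_convergence (f := f)
      (g := fun k => Real.exp (-1) / ((Nat.factorial (k+2)):ℝ) * P (k+2) j)
      (bound := fun k => (2:ℝ)^(k+2) / ((Nat.factorial (k+2)):ℝ) / 2^j) hbsum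
      (by
        intro k
        have h := (b_tendsto (k+2)).mul_const (P (k+2) j)
        apply h.congr'
        filter_upwards [eventually_ge_atTop (k+2)] with n hn
        rw [hf]
        simp only
        rw [if_pos hn])
      (by
        filter_upwards [eventually_ge_atTop 2] with n hn
        intro k
        rw [hf]
        simp only
        split_ifs with h
        · have hp := hPb j hj (k+2) (by omega)
          have h1n := one_sub_inv_nonneg n hn
          have hfp : (0:ℝ) < ((Nat.factorial (k+2)):ℝ) := by
            exact_mod_cast (Nat.factorial_pos (k+2))
          have hc1 : (n.choose (k+2) : ℝ) * (1/(n:ℝ))^(k+2) ≤ 1/((Nat.factorial (k+2)):ℝ) :=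
            choose_mul_inv_pow_le n (k+2) (by omega)
          have hc2 : (1 - 1/(n:ℝ))^(n-(k+2)) ≤ 1 := by
            apply pow_le_one₀ h1n
            have hn0 : (0:ℝ) < (n:ℝ) := by exact_mod_cast Nat.lt_of_lt_of_le (by norm_num) hn
            have : (0:ℝ) < 1/(n:ℝ) := by positivity
            linarith
          have hnn : (0:ℝ) ≤ (n.choose (k+2) : ℝ) * (1/(n:ℝ))^(k+2) *
              (1 - 1/(n:ℝ))^(n-(k+2)) * P (k+2) j := by
            apply mul_nonneg _ hp.1
            apply mul_nonneg _ (pow_nonneg h1n _)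
            positivity
          rw [Real.norm_eq_abs, abs_of_nonneg hnn]
          calc (n.choose (k+2) : ℝ) * (1/(n:ℝ))^(k+2) * (1 - 1/(n:ℝ))^(n-(k+2)) * P (k+2) j
              ≤ (1/((Nat.factorial (k+2)):ℝ) * 1) * (2^(k+2)/2^j) := by
                apply mul_le_mul _ hp.2 hp.1 _
                · exact mul_le_mul hc1 hc2 (pow_nonneg h1n _) (by positivity)
                · positivity
            _ = (2:ℝ)^(k+2) / ((Nat.factorial (k+2)):ℝ) / 2^j := by ring
        · simp only [norm_zero]
          positivity)
    have htend : Tendsto (fun n : ℕ => ∑' k, f n k) atTop (𝓝 (T j)) := by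
      rw [hT]
      exact htannery
    apply htend.congr'
    filter_upwards [eventually_ge_atTop 2] with n hn
    exact (heq n hn).symm
  -- Step B : recurrence for Q
  have hQrec : ∀ j : ℕ, 2 ≤ j → Q j = Real.exp (-1) * Q (j-1) + T (j-1) := by
    intro j hj
    have hlim1 : Tendsto (fun n : ℕ => (1 - 1/(n:ℝ))^n * P n (j-1)) atTop
        (𝓝 (Real.exp (-1) * Q (j-1))) := by
      have hb0 : Tendsto (fun n : ℕ => (1-1/(n:ℝ))^n) atTop (𝓝 (Real.exp (-1))) := by
        have := one_sub_div_pow_tendsto 0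
        simpa using this
      exact hb0.mul (hQ (j-1) (by omega))
    have hRHS := hlim1.add (stepA (j-1) (by omega))
    apply tendsto_nhds_unique (hQ j (by omega))
    apply hRHS.congr'
    filter_upwards [eventually_ge_atTop 2] with n hn
    exact (hP n hn j hj).symm
  -- Step C : 2^j * T j → ρ
  have stepC : Tendsto (fun j : ℕ => (2:ℝ)^j * T j) atTop (𝓝 ρ) := by
    have heq2 : ∀ j : ℕ, (2:ℝ)^j * T j
        = ∑' k, Real.exp (-1)/((Nat.factorial (k+2)):ℝ) * ((2:ℝ)^j * P (k+2) j) := by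
      intro j
      rw [hT]
      simp only
      rw [← tsum_mul_left]
      apply tsum_congr
      intro k
      ring
    rw [hρ]
    have hbsum2 : Summable (fun k : ℕ =>
        Real.exp (-1)/((Nat.factorial (k+2)):ℝ) * (2:ℝ)^(k+2)) := by
      apply Summable.congr
        (f := fun k : ℕ => Real.exp (-1) * ((2:ℝ)^(k+2) / ((Nat.factorial (k+2)):ℝ)))
      · exact Summable.mul_left _
          ((summable_nat_add_iff (f := fun m : ℕ => (2:ℝ)^m / (Nat.factorial m : ℝ)) 2).2
            (Real.summable_pow_div_factorial 2))
      · intro k; ring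
    have htannery2 := tendsto_tsum_of_dominated_convergence
      (f := fun (j k : ℕ) => Real.exp (-1)/((Nat.factorial (k+2)):ℝ) * ((2:ℝ)^j * P (k+2) j))
      (g := fun k => Real.exp (-1)/((Nat.factorial (k+2)):ℝ) * R (k+2))
      (bound := fun k => Real.exp (-1)/((Nat.factorial (k+2)):ℝ) * (2:ℝ)^(k+2)) hbsum2
      (by
        intro k
        exact (hR (k+2) (by omega)).const_mul _)
      (by
        filter_upwards [eventually_ge_atTop 1] with j hj
        intro k
        have hp := hPb j hj (k+2) (by omega)
        have hcoef : (0:ℝ) ≤ Real.exp (-1)/((Nat.factorial (k+2)):ℝ) := by positivity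
        have hnn : (0:ℝ) ≤ Real.exp (-1)/((Nat.factorial (k+2)):ℝ) * ((2:ℝ)^j * P (k+2) j) := by
          apply mul_nonneg hcoef
          exact mul_nonneg (by positivity) hp.1
        rw [Real.norm_eq_abs, abs_of_nonneg hnn]
        apply mul_le_mul_of_nonneg_left _ hcoef
        calc (2:ℝ)^j * P (k+2) j ≤ (2:ℝ)^j * (2^(k+2)/2^j) :=
              mul_le_mul_of_nonneg_left hp.2 (by positivity)
          _ = 2^(k+2) := by field_simp)
    exact htannery2.congr (fun j => (heq2 j).symm)
  -- Step D : contraction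
  have ha0 : (0:ℝ) ≤ 2 * Real.exp (-1) := by positivity
  have ha1 : 2 * Real.exp (-1) < 1 := by
    have h2 : Real.exp (-1) < 1/2 := by
      rw [Real.exp_neg]
      have hgt : (2:ℝ) < Real.exp 1 := by
        have := Real.exp_one_gt_d9
        linarith
      have h := one_div_lt_one_div_of_lt (by norm_num : (0:ℝ) < 2) hgt
      rw [one_div (Real.exp 1)] at h
      linarith
    linarith
  have hu : Tendsto (fun j : ℕ => 2 * ((2:ℝ)^(j+1) * T (j+1))) atTop (𝓝 (2*ρ)) := by
    have := (stepC.const_mul 2).comp (tendsto_add_atTop_nat 1)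
    exact this
  have hx : ∀ j : ℕ, (2:ℝ)^(j+1+1) * Q (j+1+1)
      = (2 * Real.exp (-1)) * ((2:ℝ)^(j+1) * Q (j+1)) + 2 * ((2:ℝ)^(j+1) * T (j+1)) := by
    intro j
    have hr := hQrec (j+2) (by omega)
    have h21 : j + 2 - 1 = j + 1 := by omega
    rw [h21] at hr
    rw [show j+1+1 = j+2 from rfl, hr,
      show (2:ℝ)^(j+2) = 2 * 2^(j+1) by rw [pow_succ]; ring]
    ring
  have hfin := contraction_lemma (x := fun j : ℕ => (2:ℝ)^(j+1) * Q (j+1))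
    (u := fun j : ℕ => 2 * ((2:ℝ)^(j+1) * T (j+1))) ha0 ha1 hx hu
  exact (tendsto_add_atTop_iff_nat (f := fun j : ℕ => (2:ℝ)^j * Q j)
    (l := 𝓝 (2 * ρ / (1 - 2 * Real.exp (-1)))) 1).1 hfin
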